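/- arXiv:1705.03316 — 3 statements merged into one kernel-verified Lean document; each statement's English description precedes it below -/
import Mathlib

section
/- Let p be a prime, q = p² + p + 1, and let B ⊆ ℤ_q satisfy R_{B,−B}(n) = 1 for all nonzero n ∈ ℤ_q. Then the number of n ∈ ℤ_q with R_B(n) = 1 equals p + 1, the number of n ∈ ℤ_q with R_B(n) = 2 equals p(p+1)/2, and the number of n ∈ ℤ_q with R_B(n) = 0 equals (p² − p)/2. -/
/-- `repFn2 A B g` is the number of ordered pairs `(a, b) ∈ A × B` with `a + b = g`. -/
def repFn2 {G : Type*} [AddCommGroup G] [DecidableEq G] (A B : Finset G) (g : G) : ℕ :=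
  ((A ×ˢ B).filter fun p => p.1 + p.2 = g).card

/-- `repFn A g` is the number of ordered pairs `(a, a') ∈ A × A` with `a + a' = g`. -/
def repFn {G : Type*} [AddCommGroup G] [DecidableEq G] (A : Finset G) (g : G) : ℕ :=
  repFn2 A A g

set_option maxHeartbeats 1000000 in
theorem stmt_15 (p : ℕ) (hp : p.Prime) (B : Finset (ZMod (p ^ 2 + p + 1)))
    (hB : ∀ n : ZMod (p ^ 2 + p + 1), n ≠ 0 → repFn2 B (B.image fun b => -b) n = 1) :
    {n : ZMod (p ^ 2 + p + 1) | repFn B n = 1}.ncard = p + 1 ∧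
    {n : ZMod (p ^ 2 + p + 1) | repFn B n = 2}.ncard = p * (p + 1) / 2 ∧
    {n : ZMod (p ^ 2 + p + 1) | repFn B n = 0}.ncard = (p ^ 2 - p) / 2 := by
  classical
  haveI : NeZero (p ^ 2 + p + 1) := ⟨by omega⟩
  have hp2 := hp.two_le
  -- uniqueness of difference representations
  have hdiff : ∀ a ∈ B, ∀ b ∈ B, ∀ c ∈ B, ∀ d ∈ B,
      a - b = c - d → a ≠ b → a = c ∧ b = d := by
    intro a ha b hb c hc d hd hsub hne
    have hn : a - b ≠ (0 : ZMod (p ^ 2 + p + 1)) := sub_ne_zero.mpr hne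
    have h1 := hB (a - b) hn
    unfold repFn2 at h1
    have hmem : ∀ x y : ZMod (p ^ 2 + p + 1), x ∈ B → y ∈ B → x - y = a - b →
        (x, -y) ∈ (B ×ˢ B.image fun b => -b).filter fun pr => pr.1 + pr.2 = a - b := by
      intro x y hx hy hxy
      refine Finset.mem_filter.mpr ⟨Finset.mem_product.mpr ⟨hx, ?_⟩, ?_⟩
      · exact Finset.mem_image.mpr ⟨y, hy, rfl⟩
      · rw [← sub_eq_add_neg]; exact hxy
    have h2 := Finset.card_le_one.mp h1.le _ (hmem a b ha hb rfl) _ (hmem c d hc hd hsub.symm)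
    have h3 := congrArg Prod.fst h2
    have h4 := congrArg Prod.snd h2
    exact ⟨h3, neg_injective h4⟩
  -- cardinality of B
  have hBcard : B.card = p + 1 := by
    have h0 : ((B ×ˢ B.image fun b => -b).filter
        fun pr => pr.1 + pr.2 = (0 : ZMod (p ^ 2 + p + 1))) = B.image fun a => (a, -a) := by
      ext ⟨x, y⟩
      simp only [Finset.mem_filter, Finset.mem_product, Finset.mem_image, Prod.mk.injEq]
      constructor
      · rintro ⟨⟨hx, y', hy', hy⟩, hxy⟩
        exact ⟨x, hx, rfl, (eq_neg_of_add_eq_zero_right hxy).symm⟩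
      · rintro ⟨a, ha, rfl, rfl⟩
        exact ⟨⟨ha, a, ha, rfl⟩, add_neg_cancel a⟩
    have hsum0 : (B ×ˢ (B.image fun b => -b)).card =
        ∑ n : ZMod (p ^ 2 + p + 1),
          ((B ×ˢ B.image fun b => -b).filter fun pr => pr.1 + pr.2 = n).card :=
      Finset.card_eq_sum_card_fiberwise (fun x _ => Finset.mem_univ _)
    have hsplit := Finset.sum_erase_add Finset.univ
      (fun n => ((B ×ˢ B.image fun b => -b).filter fun pr => pr.1 + pr.2 = n).card)
      (Finset.mem_univ (0 : ZMod (p ^ 2 + p + 1)))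
    beta_reduce at hsplit
    have herase : ∑ n ∈ Finset.univ.erase (0 : ZMod (p ^ 2 + p + 1)),
        ((B ×ˢ B.image fun b => -b).filter fun pr => pr.1 + pr.2 = n).card
        = p ^ 2 + p := by
      rw [Finset.sum_congr rfl (fun n hn => by
        have := hB n (Finset.mem_erase.mp hn).1
        unfold repFn2 at this
        exact this)]
      simp only [Finset.sum_const, smul_eq_mul, mul_one]
      rw [Finset.card_erase_of_mem (Finset.mem_univ _), Finset.card_univ, ZMod.card]
      omega
    have h0c : ((B ×ˢ B.image fun b => -b).filter
        fun pr => pr.1 + pr.2 = (0 : ZMod (p ^ 2 + p + 1))).card = B.card := by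
      rw [h0, Finset.card_image_of_injective]
      intro a b hab
      exact congrArg Prod.fst hab
    rw [Finset.card_product, Finset.card_image_of_injective _ neg_injective,
      ← hsplit, herase, h0c] at hsum0
    -- hsum0 : B.card * B.card = p ^ 2 + p + B.card
    rcases Nat.lt_or_ge B.card (p + 1) with h1 | h1
    · nlinarith
    · rcases Nat.lt_or_ge (p + 1) B.card with h2 | h2
      · nlinarith
      · omega
  -- swap uniqueness for sum representations
  have hswap : ∀ n : ZMod (p ^ 2 + p + 1),
      ∀ x ∈ (B ×ˢ B).filter (fun pr => pr.1 + pr.2 = n),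
      ∀ y ∈ (B ×ˢ B).filter (fun pr => pr.1 + pr.2 = n), y = x ∨ y = x.swap := by
    rintro n ⟨a, b⟩ hx ⟨c, d⟩ hy
    simp only [Finset.mem_filter, Finset.mem_product] at hx hy
    obtain ⟨⟨ha, hb⟩, hab⟩ := hx
    obtain ⟨⟨hc, hd⟩, hcd⟩ := hy
    by_cases h : a = d
    · right
      have hcb : c = b := by linear_combination hcd - hab + h
      exact Prod.ext_iff.mpr ⟨hcb, h.symm⟩
    · left
      have hsub : a - d = c - b := by linear_combination hab - hcd
      obtain ⟨h1, h2⟩ := hdiff a ha d hd c hc b hb hsub h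
      exact Prod.ext_iff.mpr ⟨h1.symm, h2⟩
  -- repFn is at most 2
  have hle : ∀ n, repFn B n ≤ 2 := by
    intro n
    show ((B ×ˢ B).filter fun pr => pr.1 + pr.2 = n).card ≤ 2
    rcases Finset.eq_empty_or_nonempty ((B ×ˢ B).filter fun pr => pr.1 + pr.2 = n) with
      he | ⟨x, hx⟩
    · simp [he]
    · calc ((B ×ˢ B).filter fun pr => pr.1 + pr.2 = n).card
          ≤ ({x, x.swap} : Finset _).card := by
            apply Finset.card_le_card
            intro y hy
            rcases hswap n x hx y hy with h | h <;> simp [h]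
        _ ≤ 2 := (Finset.card_insert_le _ _).trans (by simp)
  -- the fiber of 1 is the set of doubles
  have hT1 : (Finset.univ.filter fun n => repFn B n = 1)
      = B.image fun b => b + b := by
    ext n
    simp only [Finset.mem_filter, Finset.mem_univ, true_and, Finset.mem_image]
    constructor
    · intro h1
      have h1' : ((B ×ˢ B).filter fun pr => pr.1 + pr.2 = n).card = 1 := h1
      obtain ⟨x, hx⟩ := Finset.card_eq_one.mp h1'
      obtain ⟨a, b⟩ := x
      have hxmem : (a, b) ∈ (B ×ˢ B).filter fun pr => pr.1 + pr.2 = n := by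
        rw [hx]; exact Finset.mem_singleton_self _
      have hm := Finset.mem_filter.mp hxmem
      have ha := (Finset.mem_product.mp hm.1).1
      have hb := (Finset.mem_product.mp hm.1).2
      have hab : a + b = n := hm.2
      have hswapmem : (b, a) ∈ (B ×ˢ B).filter fun pr => pr.1 + pr.2 = n :=
        Finset.mem_filter.mpr ⟨Finset.mem_product.mpr ⟨hb, ha⟩, (add_comm b a).trans hab⟩
      rw [hx, Finset.mem_singleton] at hswapmem
      have hba : b = a := congrArg Prod.fst hswapmem
      exact ⟨a, ha, by rw [hba] at hab; exact hab⟩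
    · rintro ⟨b, hb, rfl⟩
      show ((B ×ˢ B).filter fun pr => pr.1 + pr.2 = b + b).card = 1
      apply Finset.card_eq_one.mpr
      refine ⟨(b, b), Finset.eq_singleton_iff_unique_mem.mpr ⟨?_, ?_⟩⟩
      · exact Finset.mem_filter.mpr ⟨Finset.mem_product.mpr ⟨hb, hb⟩, rfl⟩
      · intro y hy
        have hm : (b, b) ∈ (B ×ˢ B).filter fun pr => pr.1 + pr.2 = b + b :=
          Finset.mem_filter.mpr ⟨Finset.mem_product.mpr ⟨hb, hb⟩, rfl⟩
        rcases hswap (b + b) (b, b) hm y hy with h | h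
        · exact h
        · simpa using h
  -- cardinality of the fiber of 1
  have e1 : (Finset.univ.filter fun n => repFn B n = 1).card = p + 1 := by
    rw [hT1, ← hBcard]
    apply Finset.card_image_of_injOn
    intro b hb b' hb' hbb
    have h1 : (b, b) ∈ (B ×ˢ B).filter fun pr => pr.1 + pr.2 = b + b :=
      Finset.mem_filter.mpr ⟨Finset.mem_product.mpr ⟨hb, hb⟩, rfl⟩
    have h2 : (b', b') ∈ (B ×ˢ B).filter fun pr => pr.1 + pr.2 = b + b :=
      Finset.mem_filter.mpr ⟨Finset.mem_product.mpr ⟨hb', hb'⟩, hbb.symm⟩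
    rcases hswap (b + b) (b, b) h1 (b', b') h2 with h | h <;>
      exact (congrArg Prod.fst h).symm
  -- total count
  have hsumf : ∑ n : ZMod (p ^ 2 + p + 1), repFn B n = (p + 1) * (p + 1) := by
    have h := Finset.card_eq_sum_card_fiberwise
      (s := B ×ˢ B) (t := (Finset.univ : Finset (ZMod (p ^ 2 + p + 1))))
      (f := fun pr => pr.1 + pr.2) (fun x _ => Finset.mem_univ _)
    rw [Finset.card_product, hBcard] at h
    exact h.symm
  set t1 := (Finset.univ.filter fun n => repFn B n = 1).card with ht1
  set t2 := (Finset.univ.filter fun n => repFn B n = 2).card with ht2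
  set t0 := (Finset.univ.filter fun n => repFn B n = 0).card with ht0
  have e2 : t1 + 2 * t2 = (p + 1) * (p + 1) := by
    calc t1 + 2 * t2
        = ∑ n : ZMod (p ^ 2 + p + 1), ((if repFn B n = 1 then 1 else 0)
            + 2 * (if repFn B n = 2 then 1 else 0)) := by
          rw [Finset.sum_add_distrib, ← Finset.mul_sum, ← Finset.card_filter,
            ← Finset.card_filter]
      _ = ∑ n : ZMod (p ^ 2 + p + 1), repFn B n := by
          refine Finset.sum_congr rfl fun n _ => ?_
          have h := hle n
          have h3 : repFn B n = 0 ∨ repFn B n = 1 ∨ repFn B n = 2 := by omega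
          rcases h3 with h3 | h3 | h3 <;> rw [h3] <;> norm_num
      _ = (p + 1) * (p + 1) := hsumf
  have e3 : t0 + t1 + t2 = p ^ 2 + p + 1 := by
    calc t0 + t1 + t2
        = ∑ n : ZMod (p ^ 2 + p + 1), ((if repFn B n = 0 then 1 else 0)
            + (if repFn B n = 1 then 1 else 0) + (if repFn B n = 2 then 1 else 0)) := by
          rw [Finset.sum_add_distrib, Finset.sum_add_distrib, ← Finset.card_filter,
            ← Finset.card_filter, ← Finset.card_filter]
      _ = ∑ _n : ZMod (p ^ 2 + p + 1), 1 := by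
          refine Finset.sum_congr rfl fun n _ => ?_
          have h := hle n
          have h3 : repFn B n = 0 ∨ repFn B n = 1 ∨ repFn B n = 2 := by omega
          rcases h3 with h3 | h3 | h3 <;> rw [h3] <;> norm_num
      _ = p ^ 2 + p + 1 := by
          rw [Finset.sum_const, smul_eq_mul, mul_one, Finset.card_univ, ZMod.card]
  have hset : ∀ c : ℕ, {n : ZMod (p ^ 2 + p + 1) | repFn B n = c}.ncard
      = (Finset.univ.filter fun n => repFn B n = c).card := fun c => by
    rw [Set.ncard_eq_toFinset_card', Set.toFinset_setOf]
  have h2' : p * (p + 1) = t2 * 2 := by nlinarith [e1, e2]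
  refine ⟨?_, ?_, ?_⟩
  · rw [hset]; exact e1
  · rw [hset, ← ht2, h2']; omega
  · rw [hset, ← ht0]
    have hps : p ^ 2 = t0 * 2 + p := by nlinarith [e1, e2, e3]
    rw [hps]; omega
end

section
/- Let p be a prime, q = p² + p + 1, m = 2q, and let B ⊆ ℤ_q satisfy R_{B,−B}(n) = 1 for all nonzero n ∈ ℤ_q. For an integer l with 0 ≤ l ≤ q − 1, define A_l ⊆ ℤ_m as the union of {2b mod m : b ∈ B} and {2b + 2l + 1 mod m : b ∈ B}, where each residue b ∈ ℤ_q is represented by an integer. Then R_{A_l}(n) ≤ 4 for all n ∈ ℤ_m. -/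
section aux
variable {G : Type*} [AddCommGroup G] [DecidableEq G]

lemma repFn2_union_left_le (X Y Z : Finset G) (n : G) :
    repFn2 (X ∪ Y) Z n ≤ repFn2 X Z n + repFn2 Y Z n := by
  unfold repFn2
  rw [Finset.union_product, Finset.filter_union]
  exact Finset.card_union_le _ _

lemma repFn2_union_right_le (X Y Z : Finset G) (n : G) :
    repFn2 X (Y ∪ Z) n ≤ repFn2 X Y n + repFn2 X Z n := by
  unfold repFn2
  rw [Finset.product_union, Finset.filter_union]
  exact Finset.card_union_le _ _

lemma repFn2_image_le {H : Type*} [AddCommGroup H] [DecidableEq H]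
    (B : Finset G) (u v : G → H) (n : H) :
    repFn2 (B.image u) (B.image v) n ≤
      ((B ×ˢ B).filter fun ab => u ab.1 + v ab.2 = n).card := by
  apply Finset.card_le_card_of_surjOn (fun ab => (u ab.1, v ab.2))
  intro x hx
  simp only [Finset.coe_filter, Set.mem_setOf_eq, Finset.mem_product, Finset.mem_image] at hx ⊢
  obtain ⟨⟨⟨a, ha, hax⟩, ⟨b, hb, hbx⟩⟩, hsum⟩ := hx
  exact ⟨(a, b), ⟨⟨ha, hb⟩, by simp [hax, hbx, hsum]⟩, by simp [hax, hbx]⟩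

/-- In a perfect difference set, every element has at most 2 ordered sum representations. -/
lemma sum_bound (B : Finset G)
    (hB : ∀ n : G, n ≠ 0 → repFn2 B (B.image fun b => -b) n = 1)
    (s : G) : repFn B s ≤ 2 := by
  have key : ∀ a b c d : G, a ∈ B → b ∈ B → c ∈ B → d ∈ B →
      a - b = c - d → a - b ≠ 0 → a = c ∧ b = d := by
    intro a b c d ha hb hc hd h hne
    have h1 := hB (a - b) hne
    unfold repFn2 at h1
    have hmem1 : (a, -b) ∈ (B ×ˢ B.image fun b => -b).filter (fun p => p.1 + p.2 = a - b) := by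
      simp only [Finset.mem_filter, Finset.mem_product, Finset.mem_image]
      exact ⟨⟨ha, ⟨b, hb, rfl⟩⟩, (sub_eq_add_neg a b).symm⟩
    have hmem2 : (c, -d) ∈ (B ×ˢ B.image fun b => -b).filter (fun p => p.1 + p.2 = a - b) := by
      simp only [Finset.mem_filter, Finset.mem_product, Finset.mem_image]
      exact ⟨⟨hc, ⟨d, hd, rfl⟩⟩, by rw [h]; exact (sub_eq_add_neg c d).symm⟩
    have heq := Finset.card_le_one.mp (le_of_eq h1) _ hmem1 _ hmem2
    have h1' : a = c := congrArg Prod.fst heq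
    have h2' : -b = -d := congrArg Prod.snd heq
    exact ⟨h1', neg_inj.mp h2'⟩
  unfold repFn repFn2
  rcases Finset.eq_empty_or_nonempty ((B ×ˢ B).filter fun pr => pr.1 + pr.2 = s) with h | ⟨⟨a, b⟩, hab⟩
  · simp [h]
  · simp only [Finset.mem_filter, Finset.mem_product] at hab
    obtain ⟨⟨ha, hb⟩, hs⟩ := hab
    have hsub : ((B ×ˢ B).filter fun pr => pr.1 + pr.2 = s) ⊆ {(a, b), (b, a)} := by
      rintro ⟨c, d⟩ hcd
      simp only [Finset.mem_filter, Finset.mem_product] at hcd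
      obtain ⟨⟨hc, hd⟩, hs'⟩ := hcd
      by_cases hac : a = c
      · subst hac
        have : d = b := by
          have : a + b = a + d := by rw [hs, hs']
          exact (add_left_cancel this).symm
        subst this
        simp
      · have hdiff : a - c = d - b := by
          rw [sub_eq_sub_iff_add_eq_add, hs, ← hs']
          exact add_comm c d
        obtain ⟨h1, h2⟩ := key a c d b ha hc hd hb hdiff (sub_ne_zero.mpr hac)
        subst h1; subst h2
        simp
    calc ((B ×ˢ B).filter fun p => p.1 + p.2 = s).card
        ≤ ({(a, b), (b, a)} : Finset (G × G)).card := Finset.card_le_card hsub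
      _ ≤ 2 := by
          apply le_trans (Finset.card_insert_le _ _)
          simp

end aux
section zmod
variable (q : ℕ) [NeZero q]

instance : NeZero (2 * q) := ⟨by have := NeZero.pos q; omega⟩

/-- The canonical injective additive embedding of `ZMod q` into the even part of `ZMod (2q)`. -/
def fmap : ZMod q → ZMod (2 * q) := fun b => ((2 * b.val : ℕ) : ZMod (2 * q))

lemma fmap_val_even (x : ZMod q) : (fmap q x).val % 2 = 0 := by
  show ((2 * x.val : ℕ) : ZMod (2 * q)).val % 2 = 0
  rw [ZMod.val_natCast, Nat.mod_mod_of_dvd _ ⟨q, rfl⟩]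
  omega

lemma val_add_par (u v : ZMod (2 * q)) : (u + v).val % 2 = (u.val + v.val) % 2 := by
  rw [ZMod.val_add, Nat.mod_mod_of_dvd _ ⟨q, rfl⟩]

lemma fmap_add (a b : ZMod q) : fmap q a + fmap q b = fmap q (a + b) := by
  show ((2 * a.val : ℕ) : ZMod (2 * q)) + ((2 * b.val : ℕ) : ZMod (2 * q))
      = ((2 * (a + b).val : ℕ) : ZMod (2 * q))
  rw [ZMod.val_add]
  have h1 : ((2 * a.val : ℕ) : ZMod (2 * q)) + ((2 * b.val : ℕ) : ZMod (2 * q))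
      = ((2 * (a.val + b.val) : ℕ) : ZMod (2 * q)) := by push_cast; ring
  rw [h1]
  exact (ZMod.natCast_eq_natCast_iff _ _ _).mpr
    (((Nat.mod_modEq (a.val + b.val) q).mul_left' 2).symm)

lemma fmap_inj : Function.Injective (fmap q) := by
  intro x y h
  have h2 := (ZMod.natCast_eq_natCast_iff _ _ _).mp h
  unfold Nat.ModEq at h2
  rw [Nat.mul_mod_mul_left, Nat.mul_mod_mul_left] at h2
  have h3 : x.val % q = y.val % q := by omega
  rw [Nat.mod_eq_of_lt (ZMod.val_lt x), Nat.mod_eq_of_lt (ZMod.val_lt y)] at h3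
  exact ZMod.val_injective _ h3

lemma fmap_surj_even (m : ZMod (2 * q)) (hm : m.val % 2 = 0) :
    fmap q ((m.val / 2 : ℕ) : ZMod q) = m := by
  show ((2 * (((m.val / 2 : ℕ) : ZMod q)).val : ℕ) : ZMod (2 * q)) = m
  rw [ZMod.val_natCast]
  have hmod : (2 * ((m.val / 2) % q)) ≡ 2 * (m.val / 2) [MOD 2 * q] :=
    (Nat.mod_modEq (m.val / 2) q).mul_left' 2
  have h2 : 2 * (m.val / 2) = m.val := by omega
  calc ((2 * (m.val / 2 % q) : ℕ) : ZMod (2 * q)) = ((m.val : ℕ) : ZMod (2 * q)) := by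
        rw [(ZMod.natCast_eq_natCast_iff _ _ _).mpr (hmod.trans (by rw [h2]))]
    _ = m := by simp [ZMod.natCast_val, ZMod.cast_id]

lemma fmap_eq_iff (x : ZMod q) (m : ZMod (2 * q)) (hm : m.val % 2 = 0) :
    fmap q x = m ↔ x = ((m.val / 2 : ℕ) : ZMod q) := by
  constructor
  · intro h
    exact fmap_inj q (h.trans (fmap_surj_even q m hm).symm)
  · rintro rfl
    exact fmap_surj_even q m hm

lemma term_zero (B : Finset (ZMod q)) (c n : ZMod (2 * q)) (hpar : n.val % 2 ≠ c.val % 2) :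
    ((B ×ˢ B).filter fun ab => fmap q (ab.1 + ab.2) + c = n).card = 0 := by
  rw [Finset.card_eq_zero, Finset.filter_eq_empty_iff]
  intro ab _
  intro h
  apply hpar
  have e1 := val_add_par q (fmap q (ab.1 + ab.2)) c
  have e2 := fmap_val_even q (ab.1 + ab.2)
  rw [← h, e1]
  omega

lemma term_two (B : Finset (ZMod q)) (hsum : ∀ s, repFn B s ≤ 2) (c n : ZMod (2 * q)) :
    ((B ×ˢ B).filter fun ab => fmap q (ab.1 + ab.2) + c = n).card ≤ 2 := by
  by_cases hm : (n - c).val % 2 = 0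
  · have hcongr : ∀ ab ∈ B ×ˢ B,
        (fmap q (ab.1 + ab.2) + c = n ↔ ab.1 + ab.2 = (((n - c).val / 2 : ℕ) : ZMod q)) := by
      intro ab _
      rw [← fmap_eq_iff q _ _ hm, ← eq_sub_iff_add_eq]
    rw [Finset.filter_congr hcongr]
    exact hsum _
  · have : ((B ×ˢ B).filter fun ab => fmap q (ab.1 + ab.2) + c = n).card = 0 := by
      rw [Finset.card_eq_zero, Finset.filter_eq_empty_iff]
      intro ab _ h
      apply hm
      have : fmap q (ab.1 + ab.2) = n - c := eq_sub_iff_add_eq.mpr h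
      rw [← this]
      exact fmap_val_even q _
    omega

end zmod

theorem stmt_16 (p : ℕ) (hp : p.Prime) (B : Finset (ZMod (p ^ 2 + p + 1)))
    (hB : ∀ n : ZMod (p ^ 2 + p + 1), n ≠ 0 → repFn2 B (B.image fun b => -b) n = 1)
    (l : ℕ) (hl : l ≤ p ^ 2 + p) :
    ∀ n : ZMod (2 * (p ^ 2 + p + 1)),
      repFn ((B.image fun b => ((2 * b.val : ℕ) : ZMod (2 * (p ^ 2 + p + 1)))) ∪
             (B.image fun b => ((2 * b.val + 2 * l + 1 : ℕ) : ZMod (2 * (p ^ 2 + p + 1))))) n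
        ≤ 4 := by
  intro n
  haveI : NeZero (p ^ 2 + p + 1) := ⟨by positivity⟩
  have hsum : ∀ s : ZMod (p ^ 2 + p + 1), repFn B s ≤ 2 := sum_bound B hB
  set X := B.image (fun b => ((2 * b.val : ℕ) : ZMod (2 * (p ^ 2 + p + 1)))) with hX
  set Y := B.image (fun b => ((2 * b.val + 2 * l + 1 : ℕ) : ZMod (2 * (p ^ 2 + p + 1)))) with hY
  have hsplit : repFn (X ∪ Y) n ≤
      repFn2 X X n + repFn2 X Y n + (repFn2 Y X n + repFn2 Y Y n) :=
    calc repFn (X ∪ Y) n = repFn2 (X ∪ Y) (X ∪ Y) n := rfl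
      _ ≤ repFn2 X (X ∪ Y) n + repFn2 Y (X ∪ Y) n := repFn2_union_left_le X Y (X ∪ Y) n
      _ ≤ repFn2 X X n + repFn2 X Y n + (repFn2 Y X n + repFn2 Y Y n) :=
          add_le_add (repFn2_union_right_le X X Y n) (repFn2_union_right_le Y X Y n)
  set c1 : ZMod (2 * (p ^ 2 + p + 1)) := ((2 * l + 1 : ℕ) : ZMod (2 * (p ^ 2 + p + 1))) with hc1
  set c2 : ZMod (2 * (p ^ 2 + p + 1)) :=
    ((2 * (2 * l + 1) : ℕ) : ZMod (2 * (p ^ 2 + p + 1))) with hc2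
  have hc1v : c1.val % 2 = 1 := by
    rw [hc1, ZMod.val_natCast, Nat.mod_mod_of_dvd _ ⟨p ^ 2 + p + 1, rfl⟩]
    omega
  have hc2v : c2.val % 2 = 0 := by
    rw [hc2, ZMod.val_natCast, Nat.mod_mod_of_dvd _ ⟨p ^ 2 + p + 1, rfl⟩]
    omega
  have h0v : (0 : ZMod (2 * (p ^ 2 + p + 1))).val % 2 = 0 := by rw [ZMod.val_zero]
  have hvshift : ∀ b : ZMod (p ^ 2 + p + 1),
      ((2 * b.val + 2 * l + 1 : ℕ) : ZMod (2 * (p ^ 2 + p + 1))) = fmap (p ^ 2 + p + 1) b + c1 := by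
    intro b
    show ((2 * b.val + 2 * l + 1 : ℕ) : ZMod (2 * (p ^ 2 + p + 1)))
        = ((2 * b.val : ℕ) : ZMod (2 * (p ^ 2 + p + 1))) + ((2 * l + 1 : ℕ) : _)
    push_cast
    ring
  have hc12 : c1 + c1 = c2 := by
    rw [hc1, hc2]
    push_cast
    ring
  have hfm : ∀ b : ZMod (p ^ 2 + p + 1),
      ((2 * b.val : ℕ) : ZMod (2 * (p ^ 2 + p + 1))) = fmap (p ^ 2 + p + 1) b := fun _ => rfl
  have hXX : repFn2 X X n ≤ ((B ×ˢ B).filter fun ab =>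
      fmap (p ^ 2 + p + 1) (ab.1 + ab.2) + 0 = n).card := by
    rw [hX]
    refine le_trans (repFn2_image_le B _ _ n) (le_of_eq (congrArg Finset.card ?_))
    refine Finset.filter_congr fun ab _ => ?_
    simp only [hfm]
    rw [fmap_add, add_zero]
  have hXY : repFn2 X Y n ≤ ((B ×ˢ B).filter fun ab =>
      fmap (p ^ 2 + p + 1) (ab.1 + ab.2) + c1 = n).card := by
    rw [hX, hY]
    refine le_trans (repFn2_image_le B _ _ n) (le_of_eq (congrArg Finset.card ?_))
    refine Finset.filter_congr fun ab _ => ?_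
    simp only [hfm, hvshift]
    rw [← add_assoc, fmap_add]
  have hYX : repFn2 Y X n ≤ ((B ×ˢ B).filter fun ab =>
      fmap (p ^ 2 + p + 1) (ab.1 + ab.2) + c1 = n).card := by
    rw [hX, hY]
    refine le_trans (repFn2_image_le B _ _ n) (le_of_eq (congrArg Finset.card ?_))
    refine Finset.filter_congr fun ab _ => ?_
    simp only [hfm, hvshift]
    have hr : fmap (p ^ 2 + p + 1) ab.1 + c1 + fmap (p ^ 2 + p + 1) ab.2
        = fmap (p ^ 2 + p + 1) ab.1 + fmap (p ^ 2 + p + 1) ab.2 + c1 := by ring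
    rw [hr, fmap_add]
  have hYY : repFn2 Y Y n ≤ ((B ×ˢ B).filter fun ab =>
      fmap (p ^ 2 + p + 1) (ab.1 + ab.2) + c2 = n).card := by
    rw [hY]
    refine le_trans (repFn2_image_le B _ _ n) (le_of_eq (congrArg Finset.card ?_))
    refine Finset.filter_congr fun ab _ => ?_
    simp only [hfm, hvshift]
    have hr : fmap (p ^ 2 + p + 1) ab.1 + c1 + (fmap (p ^ 2 + p + 1) ab.2 + c1)
        = fmap (p ^ 2 + p + 1) ab.1 + fmap (p ^ 2 + p + 1) ab.2 + (c1 + c1) := by ring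
    rw [hr, hc12, fmap_add]
  by_cases hn : n.val % 2 = 0
  · have t1 := term_two (p ^ 2 + p + 1) B hsum 0 n
    have t2 := term_zero (p ^ 2 + p + 1) B c1 n (by omega)
    have t4 := term_two (p ^ 2 + p + 1) B hsum c2 n
    omega
  · have t1 := term_zero (p ^ 2 + p + 1) B 0 n (by omega)
    have t2 := term_two (p ^ 2 + p + 1) B hsum c1 n
    have t4 := term_zero (p ^ 2 + p + 1) B c2 n (by omega)
    omega
end

section
/- Let p be a prime, q = p² + p + 1, m = 2q, and let A_p ⊆ ℤ_q satisfy R_{A_p,−A_p}(n) = 1 for all nonzero n ∈ ℤ_q. Define A ⊆ ℤ_m as the union of {2a mod m : a ∈ A_p} and {q + 2a mod m : a ∈ A_p}, where each residue a ∈ ℤ_q is represented by an integer. Then R_A(n) ≤ 4 for all n ∈ ℤ_m, and the number of n ∈ ℤ_m with R_A(n) = 4 equals p² + p = (1/2)m − 1. -/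
set_option linter.unusedSectionVars false

section helpers
variable {G H : Type*} [AddCommGroup G] [DecidableEq G] [AddCommGroup H] [DecidableEq H]

lemma repFn2_eq (A B : Finset G) (g : G) :
    repFn2 A B g = (A.filter fun a => g - a ∈ B).card := by
  unfold repFn2
  apply Finset.card_bij' (fun x _ => x.1) (fun a _ => (a, g - a))
  · intro x hx
    simp only [Finset.mem_filter, Finset.mem_product] at hx ⊢
    exact ⟨hx.1.1, by rw [← hx.2]; simpa using hx.1.2⟩
  · intro a ha
    simp only [Finset.mem_filter, Finset.mem_product] at ha ⊢
    exact ⟨⟨ha.1, ha.2⟩, by abel⟩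
  · intro x hx
    simp only [Finset.mem_filter, Finset.mem_product] at hx
    ext <;> simp [← hx.2]
  · intro a ha; rfl

lemma repFn2_image (e : G ≃+ H) (A B : Finset G) (g : G) :
    repFn2 (A.image e) (B.image e) (e g) = repFn2 A B g := by
  rw [repFn2_eq, repFn2_eq, Finset.filter_image]
  rw [Finset.card_image_of_injective _ e.injective]
  congr 1
  apply Finset.filter_congr
  intro a _
  constructor
  · intro h
    rcases Finset.mem_image.1 h with ⟨b, hb, hbe⟩
    have : e (g - a) = e b := by rw [map_sub]; exact hbe.symm
    simpa [e.injective this] using hb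
  · intro h
    exact Finset.mem_image.2 ⟨g - a, h, by rw [map_sub]⟩

lemma repFn2_prod (A B : Finset G) (C D : Finset H) (g : G) (h : H) :
    repFn2 (A ×ˢ C) (B ×ˢ D) (g, h) = repFn2 A B g * repFn2 C D h := by
  rw [repFn2_eq, repFn2_eq, repFn2_eq]
  rw [← Finset.card_product]
  congr 1
  rw [← Finset.filter_product]
  apply Finset.filter_congr
  intro x _
  simp [Prod.ext_iff, Finset.mem_product]

lemma sum_repFn2 [Fintype G] (A B : Finset G) :
    ∑ g : G, repFn2 A B g = A.card * B.card := by
  simp only [repFn2_eq]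
  simp only [Finset.card_filter]
  rw [Finset.sum_comm]
  have : ∀ a : G, ∑ g : G, (if g - a ∈ B then 1 else 0) = B.card := by
    intro a
    rw [← Finset.card_filter]
    rw [show (Finset.univ.filter fun g => g - a ∈ B) = B.image (· + a) by
      ext g
      simp only [Finset.mem_filter, Finset.mem_image, Finset.mem_univ, true_and]
      constructor
      · intro h; exact ⟨g - a, h, by abel⟩
      · rintro ⟨b, hb, rfl⟩; simpa using hb]
    exact Finset.card_image_of_injective _ (add_left_injective a)
  simp only [this]
  rw [Finset.sum_const, smul_eq_mul]

lemma card_filter_equiv {α β : Type*} [Fintype α] [Fintype β] [DecidableEq α] [DecidableEq β]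
    (ψ : α ≃ β) (P : β → Prop) [DecidablePred P] :
    (Finset.univ.filter fun a => P (ψ a)).card = (Finset.univ.filter P).card := by
  apply Finset.card_bij' (fun a _ => ψ a) (fun b _ => ψ.symm b) <;> simp

end helpers

section sidon
variable {q : ℕ} [NeZero q] (Ap : Finset (ZMod q))

lemma key_pair (hs : ∀ n : ZMod q, n ≠ 0 → (Ap.filter fun a => a - n ∈ Ap).card = 1)
    {s a b : ZMod q} (ha : a ∈ Ap.filter fun x => s - x ∈ Ap)
    (hb : b ∈ Ap.filter fun x => s - x ∈ Ap) (hab : a ≠ b) : a + b = s := by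
  rw [Finset.mem_filter] at ha hb
  have hn : a - b ≠ 0 := sub_ne_zero.2 hab
  rcases Finset.card_eq_one.1 (hs _ hn) with ⟨x, hx⟩
  have h1 : a ∈ Ap.filter fun y => y - (a - b) ∈ Ap :=
    Finset.mem_filter.2 ⟨ha.1, by rw [show a - (a - b) = b by ring]; exact hb.1⟩
  have h2 : s - b ∈ Ap.filter fun y => y - (a - b) ∈ Ap :=
    Finset.mem_filter.2 ⟨hb.2, by rw [show s - b - (a - b) = s - a by ring]; exact ha.2⟩
  rw [hx, Finset.mem_singleton] at h1 h2
  rw [h1, ← h2]; ring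

lemma T_card_le (hs : ∀ n : ZMod q, n ≠ 0 → (Ap.filter fun a => a - n ∈ Ap).card = 1)
    (s : ZMod q) : (Ap.filter fun a => s - a ∈ Ap).card ≤ 2 := by
  by_contra h
  push_neg at h
  rcases Finset.two_lt_card_iff.1 h with ⟨a, b, c, ha, hb, hc, hab, hac, hbc⟩
  have h1 := key_pair Ap hs ha hb hab
  have h2 := key_pair Ap hs ha hc hac
  exact hbc (by have := h1.trans h2.symm; exact add_left_cancel this)

lemma T_card_one (hs : ∀ n : ZMod q, n ≠ 0 → (Ap.filter fun a => a - n ∈ Ap).card = 1) :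
    (Finset.univ.filter fun s : ZMod q => (Ap.filter fun a => s - a ∈ Ap).card = 1)
      = Ap.image fun a => a + a := by
  ext s
  simp only [Finset.mem_filter, Finset.mem_univ, true_and, Finset.mem_image]
  constructor
  · intro h1
    rcases Finset.card_eq_one.1 h1 with ⟨a, hx⟩
    have haT : a ∈ Ap.filter fun x => s - x ∈ Ap := hx ▸ Finset.mem_singleton_self a
    rw [Finset.mem_filter] at haT
    have hsa : s - a ∈ Ap.filter fun x => s - x ∈ Ap :=
      Finset.mem_filter.2 ⟨haT.2, by rw [show s - (s - a) = a by ring]; exact haT.1⟩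
    rw [hx, Finset.mem_singleton] at hsa
    exact ⟨a, haT.1, by linear_combination -hsa⟩
  · rintro ⟨a, ha, rfl⟩
    have haT : a ∈ Ap.filter fun x => a + a - x ∈ Ap :=
      Finset.mem_filter.2 ⟨ha, by rw [show a + a - a = a by ring]; exact ha⟩
    rw [Finset.card_eq_one]
    refine ⟨a, ?_⟩
    ext b
    rw [Finset.mem_singleton]
    constructor
    · intro hb
      by_contra hba
      have := key_pair Ap hs hb haT hba
      exact hba (by linear_combination this)
    · rintro rfl; exact haT

end sidon

theorem stmt_17 (p : ℕ) (hp : p.Prime) (Ap : Finset (ZMod (p ^ 2 + p + 1)))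
    (hAp : ∀ n : ZMod (p ^ 2 + p + 1), n ≠ 0 → repFn2 Ap (Ap.image fun a => -a) n = 1) :
    (∀ n : ZMod (2 * (p ^ 2 + p + 1)),
      repFn ((Ap.image fun a => ((2 * a.val : ℕ) : ZMod (2 * (p ^ 2 + p + 1)))) ∪
             (Ap.image fun a => (((p ^ 2 + p + 1) + 2 * a.val : ℕ) : ZMod (2 * (p ^ 2 + p + 1))))) n
        ≤ 4) ∧
    {n : ZMod (2 * (p ^ 2 + p + 1)) |
      repFn ((Ap.image fun a => ((2 * a.val : ℕ) : ZMod (2 * (p ^ 2 + p + 1)))) ∪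
             (Ap.image fun a => (((p ^ 2 + p + 1) + 2 * a.val : ℕ) : ZMod (2 * (p ^ 2 + p + 1))))) n
        = 4}.ncard = p ^ 2 + p ∧
    ((p ^ 2 + p : ℕ) : ℝ) = (1 / 2 : ℝ) * (2 * (p ^ 2 + p + 1)) - 1 := by
  have hq1 : 0 < p ^ 2 + p + 1 := by positivity
  haveI : NeZero (p ^ 2 + p + 1) := ⟨hq1.ne'⟩
  haveI : NeZero (2 * (p ^ 2 + p + 1)) := ⟨by positivity⟩
  have hodd : Odd (p ^ 2 + p + 1) := by
    have h1 : Even (p ^ 2 + p) := by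
      have := Nat.even_mul_succ_self p
      rwa [show p * (p + 1) = p ^ 2 + p by ring] at this
    exact h1.add_one
  have hco : Nat.Coprime 2 (p ^ 2 + p + 1) := Nat.coprime_two_left.2 hodd
  -- translate hAp
  have hiff : ∀ n a : ZMod (p ^ 2 + p + 1),
      (n - a ∈ Ap.image fun x => -x) ↔ a - n ∈ Ap := by
    intro n a
    simp only [Finset.mem_image]
    constructor
    · rintro ⟨x, hx, he⟩
      have : x = a - n := by linear_combination -he
      rwa [← this]
    · intro h; exact ⟨a - n, h, by ring⟩
  have hs : ∀ n : ZMod (p ^ 2 + p + 1), n ≠ 0 →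
      (Ap.filter fun a => a - n ∈ Ap).card = 1 := by
    intro n hn
    have h' := hAp n hn
    rw [repFn2_eq] at h'
    have hfe : Finset.filter (fun a => n - a ∈ Ap.image fun x => -x) Ap
        = Finset.filter (fun a => a - n ∈ Ap) Ap := Finset.filter_congr fun a _ => hiff n a
    rw [hfe] at h'
    exact h'
  -- cardinality of Ap
  have hsum : ∑ n : ZMod (p ^ 2 + p + 1), (Ap.filter fun a => a - n ∈ Ap).card
      = Ap.card * Ap.card := by
    have h := sum_repFn2 Ap (Ap.image fun a => -a)
    rw [Finset.card_image_of_injective _ neg_injective] at h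
    rw [← h]
    refine Finset.sum_congr rfl fun n _ => ?_
    rw [repFn2_eq]
    congr 1
    exact Finset.filter_congr fun a _ => (hiff n a).symm
  have hF0 : (Ap.filter fun a => a - (0 : ZMod (p ^ 2 + p + 1)) ∈ Ap).card = Ap.card := by
    congr 1
    rw [Finset.filter_true_of_mem]
    intro a ha; simpa using ha
  have hcard : Ap.card * Ap.card = Ap.card + (p ^ 2 + p) := by
    rw [← hsum, ← Finset.sum_erase_add _ _ (Finset.mem_univ (0 : ZMod (p ^ 2 + p + 1))), hF0]
    have herase : ∑ n ∈ Finset.univ.erase (0 : ZMod (p ^ 2 + p + 1)),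
        (Ap.filter fun a => a - n ∈ Ap).card = p ^ 2 + p := by
      rw [Finset.sum_congr rfl fun n hn => hs n (Finset.ne_of_mem_erase hn)]
      rw [Finset.sum_const, smul_eq_mul, mul_one,
        Finset.card_erase_of_mem (Finset.mem_univ _), Finset.card_univ, ZMod.card]
      omega
    rw [herase]; omega
  have hk : Ap.card = p + 1 := by
    have hz : (Ap.card : ℤ) * Ap.card = Ap.card + (p ^ 2 + p) := by exact_mod_cast hcard
    have h2 : ((Ap.card : ℤ) - (p + 1)) * ((Ap.card : ℤ) + p) = 0 := by linear_combination hz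
    rcases mul_eq_zero.1 h2 with h | h
    · have : (Ap.card : ℤ) = p + 1 := by linarith
      exact_mod_cast this
    · exfalso
      have hc0 : (0 : ℤ) ≤ Ap.card := Int.natCast_nonneg _
      have hp2 : (2 : ℤ) ≤ p := by exact_mod_cast hp.two_le
      linarith
  -- unit 2
  set u : (ZMod (p ^ 2 + p + 1))ˣ := ZMod.unitOfCoprime 2 hco with hu
  have hu2 : (u : ZMod (p ^ 2 + p + 1)) = 2 := by
    rw [hu, ZMod.coe_unitOfCoprime]; norm_num
  have hdbl : Function.Injective (fun a : ZMod (p ^ 2 + p + 1) => a + a) := by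
    intro x y h
    have h' : (u : ZMod (p ^ 2 + p + 1)) * x = u * y := by
      rw [hu2]; ring_nf; linear_combination h
    exact (Units.mul_right_inj u).1 h'
  -- counts c1, c2
  have hc1 : (Finset.univ.filter fun s : ZMod (p ^ 2 + p + 1) =>
      (Ap.filter fun a => s - a ∈ Ap).card = 1).card = p + 1 := by
    rw [T_card_one Ap hs, Finset.card_image_of_injective _ hdbl, hk]
  set c2 := (Finset.univ.filter fun s : ZMod (p ^ 2 + p + 1) =>
      (Ap.filter fun a => s - a ∈ Ap).card = 2).card with hc2def
  have hsum2 : ∑ s : ZMod (p ^ 2 + p + 1), (Ap.filter fun a => s - a ∈ Ap).card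
      = Ap.card * Ap.card := by
    rw [← sum_repFn2 Ap Ap]
    exact Finset.sum_congr rfl fun s _ => (repFn2_eq Ap Ap s).symm
  have hc2 : 2 * c2 = p ^ 2 + p := by
    have expand : ∀ s : ZMod (p ^ 2 + p + 1), (Ap.filter fun a => s - a ∈ Ap).card
        = (if (Ap.filter fun a => s - a ∈ Ap).card = 1 then 1 else 0)
          + 2 * (if (Ap.filter fun a => s - a ∈ Ap).card = 2 then 1 else 0) := by
      intro s
      have h := T_card_le Ap hs s
      set t := (Ap.filter fun a => s - a ∈ Ap).card with ht
      interval_cases t <;> simp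
    have hsplit : Ap.card * Ap.card = (p + 1) + 2 * c2 := by
      rw [← hsum2]
      rw [Finset.sum_congr rfl fun s _ => expand s]
      rw [Finset.sum_add_distrib, ← Finset.mul_sum, ← Finset.card_filter, ← Finset.card_filter]
      rw [hc1]
    rw [hk] at hsplit
    nlinarith [hsplit]
  -- CRT setup
  set e := ZMod.chineseRemainder hco with he
  set A := ((Ap.image fun a => ((2 * a.val : ℕ) : ZMod (2 * (p ^ 2 + p + 1)))) ∪
      (Ap.image fun a => (((p ^ 2 + p + 1) + 2 * a.val : ℕ) : ZMod (2 * (p ^ 2 + p + 1)))))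
    with hA
  have hq2 : ((p ^ 2 + p + 1 : ℕ) : ZMod 2) = 1 := by
    rcases hodd with ⟨c, hc⟩
    rw [hc, Nat.cast_add, Nat.cast_mul, show ((2:ℕ):ZMod 2) = 0 from rfl, zero_mul, zero_add,
      Nat.cast_one]
  have key1 : ∀ a : ZMod (p ^ 2 + p + 1),
      e.toAddEquiv ((2 * a.val : ℕ) : ZMod (2 * (p ^ 2 + p + 1))) = ((0 : ZMod 2), 2 * a) := by
    intro a
    show e ((2 * a.val : ℕ) : ZMod (2 * (p ^ 2 + p + 1))) = _
    rw [map_natCast]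
    ext
    · show ((2 * a.val : ℕ) : ZMod 2) = 0
      rw [Nat.cast_mul, show ((2:ℕ):ZMod 2) = 0 from rfl, zero_mul]
    · show ((2 * a.val : ℕ) : ZMod (p ^ 2 + p + 1)) = 2 * a
      rw [Nat.cast_mul, Nat.cast_two, ZMod.natCast_val, ZMod.cast_id]
  have key2 : ∀ a : ZMod (p ^ 2 + p + 1),
      e.toAddEquiv (((p ^ 2 + p + 1) + 2 * a.val : ℕ) : ZMod (2 * (p ^ 2 + p + 1)))
        = ((1 : ZMod 2), 2 * a) := by
    intro a
    show e (((p ^ 2 + p + 1) + 2 * a.val : ℕ) : ZMod (2 * (p ^ 2 + p + 1))) = _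
    rw [map_natCast]
    ext
    · show (((p ^ 2 + p + 1) + 2 * a.val : ℕ) : ZMod 2) = 1
      rw [Nat.cast_add, hq2, Nat.cast_mul, show ((2:ℕ):ZMod 2) = 0 from rfl, zero_mul, add_zero]
    · show (((p ^ 2 + p + 1) + 2 * a.val : ℕ) : ZMod (p ^ 2 + p + 1)) = 2 * a
      rw [Nat.cast_add, ZMod.natCast_self, zero_add, Nat.cast_mul, Nat.cast_two,
        ZMod.natCast_val, ZMod.cast_id]
  have himg : A.image e.toAddEquiv
      = ({0, 1} : Finset (ZMod 2)) ×ˢ (Ap.image fun a => 2 * a) := by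
    rw [hA, Finset.image_union, Finset.image_image, Finset.image_image]
    ext x
    rcases x with ⟨ε, t⟩
    simp only [Finset.mem_union, Finset.mem_image, Finset.mem_product, Finset.mem_insert,
      Finset.mem_singleton, Function.comp]
    constructor
    · rintro (⟨a, ha, hax⟩ | ⟨a, ha, hax⟩)
      · rw [key1 a] at hax
        rcases Prod.mk.injEq .. ▸ hax with ⟨h1, h2⟩
        exact ⟨Or.inl h1.symm, a, ha, h2⟩
      · rw [key2 a] at hax
        rcases Prod.mk.injEq .. ▸ hax with ⟨h1, h2⟩
        exact ⟨Or.inr h1.symm, a, ha, h2⟩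
    · rintro ⟨hε, a, ha, rfl⟩
      rcases hε with rfl | rfl
      · exact Or.inl ⟨a, ha, key1 a⟩
      · exact Or.inr ⟨a, ha, key2 a⟩
  -- repFn on {0,1} in ZMod 2
  have h01 : ∀ ε : ZMod 2, repFn2 ({0, 1} : Finset (ZMod 2)) ({0, 1} : Finset (ZMod 2)) ε = 2 := by
    decide
  -- doubling image
  have h2t : ∀ t : ZMod (p ^ 2 + p + 1),
      repFn2 (Ap.image fun a => 2 * a) (Ap.image fun a => 2 * a) t
        = repFn2 Ap Ap (((u⁻¹ : (ZMod (p ^ 2 + p + 1))ˣ) : ZMod (p ^ 2 + p + 1)) * t) := by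
    intro t
    have himg2 : (Ap.image fun a => 2 * a) = Ap.image (AddAut.mulLeft u) := by
      apply Finset.image_congr
      intro a _
      show 2 * a = (u : ZMod (p ^ 2 + p + 1)) * a
      rw [hu2]
    have hte : t = (AddAut.mulLeft u)
        (((u⁻¹ : (ZMod (p ^ 2 + p + 1))ˣ) : ZMod (p ^ 2 + p + 1)) * t) := by
      show t = (u : ZMod (p ^ 2 + p + 1)) * _
      rw [← mul_assoc, u.mul_inv, one_mul]
    rw [himg2]
    conv_lhs => rw [hte]
    exact repFn2_image (AddAut.mulLeft u : ZMod (p ^ 2 + p + 1) ≃+ ZMod (p ^ 2 + p + 1)) Ap Ap _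
  -- main formula
  have hrep : ∀ n : ZMod (2 * (p ^ 2 + p + 1)), repFn A n
      = 2 * (Ap.filter fun a =>
          ((u⁻¹ : (ZMod (p ^ 2 + p + 1))ˣ) : ZMod (p ^ 2 + p + 1)) * (e n).2 - a ∈ Ap).card := by
    intro n
    have h1 : repFn A n = repFn2 (A.image e.toAddEquiv) (A.image e.toAddEquiv) (e.toAddEquiv n) :=
      (repFn2_image e.toAddEquiv A A n).symm
    rw [h1, himg]
    have hn : e.toAddEquiv n = ((e n).1, (e n).2) := rfl
    rw [hn, repFn2_prod, h01, h2t, repFn2_eq]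
  refine ⟨?_, ?_, ?_⟩
  · intro n
    rw [hrep n]
    have := T_card_le Ap hs (((u⁻¹ : (ZMod (p ^ 2 + p + 1))ˣ) : ZMod (p ^ 2 + p + 1)) * (e n).2)
    omega
  · have hset : {n : ZMod (2 * (p ^ 2 + p + 1)) | repFn A n = 4}
        = ↑(Finset.univ.filter fun n : ZMod (2 * (p ^ 2 + p + 1)) => repFn A n = 4) := by
      ext n; simp
    rw [hset, Set.ncard_coe_finset]
    have hfc : (Finset.univ.filter fun n : ZMod (2 * (p ^ 2 + p + 1)) => repFn A n = 4)
        = Finset.univ.filter fun n : ZMod (2 * (p ^ 2 + p + 1)) =>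
            (Ap.filter fun a =>
              ((u⁻¹ : (ZMod (p ^ 2 + p + 1))ˣ) : ZMod (p ^ 2 + p + 1)) * (e n).2 - a ∈ Ap).card
              = 2 := by
      apply Finset.filter_congr
      intro n _
      rw [hrep n]
      omega
    rw [hfc]
    -- bijection to product
    set ψ : ZMod (2 * (p ^ 2 + p + 1)) ≃ ZMod 2 × ZMod (p ^ 2 + p + 1) :=
      e.toEquiv.trans (Equiv.prodCongr (Equiv.refl _)
        (AddAut.mulLeft u⁻¹ : ZMod (p ^ 2 + p + 1) ≃+ ZMod (p ^ 2 + p + 1)).toEquiv) with hψ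
    have hψ2 : ∀ n, (ψ n).2
        = ((u⁻¹ : (ZMod (p ^ 2 + p + 1))ˣ) : ZMod (p ^ 2 + p + 1)) * (e n).2 := by
      intro n; rfl
    have := card_filter_equiv ψ
      (fun x : ZMod 2 × ZMod (p ^ 2 + p + 1) =>
        (Ap.filter fun a => x.2 - a ∈ Ap).card = 2)
    rw [show (Finset.univ.filter fun n : ZMod (2 * (p ^ 2 + p + 1)) =>
        (Ap.filter fun a =>
          ((u⁻¹ : (ZMod (p ^ 2 + p + 1))ˣ) : ZMod (p ^ 2 + p + 1)) * (e n).2 - a ∈ Ap).card = 2)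
        = Finset.univ.filter fun n : ZMod (2 * (p ^ 2 + p + 1)) =>
            (Ap.filter fun a => (ψ n).2 - a ∈ Ap).card = 2 by
      apply Finset.filter_congr; intro n _; rw [hψ2 n]]
    rw [this]
    have hprodfilter : (Finset.univ.filter fun x : ZMod 2 × ZMod (p ^ 2 + p + 1) =>
        (Ap.filter fun a => x.2 - a ∈ Ap).card = 2)
        = (Finset.univ : Finset (ZMod 2)) ×ˢ (Finset.univ.filter
            fun s : ZMod (p ^ 2 + p + 1) => (Ap.filter fun a => s - a ∈ Ap).card = 2) := by
      ext x
      simp [Finset.mem_product]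
    rw [hprodfilter, Finset.card_product, Finset.card_univ, ZMod.card, ← hc2def]
    omega
  · push_cast
    ring
end
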